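/- Monotonicity of the discrete time-dependent MFG residual operator: suppose each g_{i,j} is continuously differentiable and strictly convex on ℝ⁴, and f : (0,∞) → ℝ is strictly increasing. Let Y = (M₁,…,M_{N_T}, U₀,…,U_{N_T−1}) and Ỹ = (M̃₁,…,M̃_{N_T}, Ũ₀,…,Ũ_{N_T−1}) be two states whose density components are all strictly positive componentwise, sharing the same fixed endpoint data M₀ and U_{N_T}. Then ⟨F_h(Y) − F_h(Ỹ), Y − Ỹ⟩_{h,Δt} ≥ 0, where the pairing matches each residual block r_k with the density difference M_k − M̃_k and each residual block s_k with the value difference U_{k−1} − Ũ_{k−1}. Moreover, the inequality is strict whenever M_k ≠ M̃_k for some k ∈ {1,…,N_T}, or [D_h U_{k−1}]_{i,j} ≠ [D_h Ũ_{k−1}]_{i,j} for some k ∈ {1,…,N_T} and some node (i,j). -/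

import Mathlib

open scoped BigOperators

/-- Grid functions on the periodic `N × N` grid `(ℤ/Nℤ)²`. -/
abbrev Grid (N : ℕ) : Type := ZMod N → ZMod N → ℝ

/-- Mesh size `h = 1/N`. -/
noncomputable def gridh (N : ℕ) : ℝ := 1 / N

/-- Discrete pairing `⟨a,b⟩_h = h² ∑_{i,j} a_{ij} b_{ij}`. -/
noncomputable def pairh (N : ℕ) [NeZero N] (a b : Grid N) : ℝ :=
  gridh N ^ 2 * ∑ i : ZMod N, ∑ j : ZMod N, a i j * b i j

/-- One-sided difference `(D₁⁺ y)_{ij} = (y_{i+1,j} - y_{ij}) / h`. -/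
noncomputable def D1p (N : ℕ) (y : Grid N) : Grid N := fun i j => (y (i + 1) j - y i j) / gridh N

/-- One-sided difference `(D₁⁻ y)_{ij} = (y_{ij} - y_{i-1,j}) / h`. -/
noncomputable def D1m (N : ℕ) (y : Grid N) : Grid N := fun i j => (y i j - y (i - 1) j) / gridh N

/-- One-sided difference `(D₂⁺ y)_{ij} = (y_{i,j+1} - y_{ij}) / h`. -/
noncomputable def D2p (N : ℕ) (y : Grid N) : Grid N := fun i j => (y i (j + 1) - y i j) / gridh N

/-- One-sided difference `(D₂⁻ y)_{ij} = (y_{ij} - y_{i,j-1}) / h`. -/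
noncomputable def D2m (N : ℕ) (y : Grid N) : Grid N := fun i j => (y i j - y i (j - 1)) / gridh N

/-- Five-point discrete Laplacian. -/
noncomputable def lapFD (N : ℕ) (y : Grid N) : Grid N :=
  fun i j => -(4 * y i j - y (i + 1) j - y (i - 1) j - y i (j + 1) - y i (j - 1)) / gridh N ^ 2

/-- Upwind stencil `[D_h y]_{ij} ∈ ℝ⁴`. -/
noncomputable def DHs (N : ℕ) (y : Grid N) (i j : ZMod N) : Fin 4 → ℝ :=
  ![D1p N y i j, D1m N y i j, D2p N y i j, D2m N y i j]

/-- `α^{(ℓ)}(U)_{ij} = (∂g_{ij}/∂q_ℓ)([D_h U]_{ij})`. -/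
noncomputable def alphaFD (N : ℕ) (g : ZMod N → ZMod N → (Fin 4 → ℝ) → ℝ)
    (U : Grid N) (l : Fin 4) : Grid N :=
  fun i j => fderiv ℝ (g i j) (DHs N U i j) (Pi.single l 1)

/-- Discrete transport operator `B_h(U, M)`. -/
noncomputable def Bh (N : ℕ) (g : ZMod N → ZMod N → (Fin 4 → ℝ) → ℝ) (U M : Grid N) : Grid N :=
  fun i j =>
    -D1m N (fun a b => M a b * alphaFD N g U 0 a b) i j
      - D1p N (fun a b => M a b * alphaFD N g U 1 a b) i j
      - D2m N (fun a b => M a b * alphaFD N g U 2 a b) i j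
      - D2p N (fun a b => M a b * alphaFD N g U 3 a b) i j

/-- HJB residual block `r_k`. -/
noncomputable def rkFD (N : ℕ) (g : ZMod N → ZMod N → (Fin 4 → ℝ) → ℝ) (f : ℝ → ℝ)
    (Vh : Grid N) (ν Δt : ℝ) (M U : ℕ → Grid N) (k : ℕ) : Grid N :=
  fun i j => (U k i j - U (k - 1) i j) / Δt + ν * lapFD N (U (k - 1)) i j
    - g i j (DHs N (U (k - 1)) i j) + f (M k i j) + Vh i j

/-- Fokker–Planck residual block `s_k`. -/
noncomputable def skFD (N : ℕ) (g : ZMod N → ZMod N → (Fin 4 → ℝ) → ℝ)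
    (ν Δt : ℝ) (M U : ℕ → Grid N) (k : ℕ) : Grid N :=
  fun i j => (M k i j - M (k - 1) i j) / Δt - ν * lapFD N (M k) i j
    + Bh N g (U (k - 1)) (M k) i j

/-- `r̄_k = ⟨M_k, r_k⟩_h / ⟨M_k, 1⟩_h`. -/
noncomputable def rbarFD (N : ℕ) [NeZero N] (g : ZMod N → ZMod N → (Fin 4 → ℝ) → ℝ) (f : ℝ → ℝ)
    (Vh : Grid N) (ν Δt : ℝ) (M U : ℕ → Grid N) (k : ℕ) : ℝ :=
  pairh N (M k) (rkFD N g f Vh ν Δt M U k) / pairh N (M k) (fun _ _ => 1)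

/-- Entropy functional `E(Y)`. -/
noncomputable def entE (N : ℕ) [NeZero N] (NT : ℕ) (Δt : ℝ) (M U : ℕ → Grid N) : ℝ :=
  Δt * ∑ k ∈ Finset.Icc 1 NT, pairh N (M k) (fun i j => Real.log (M k i j) - 1)
    + Δt / 2 * ∑ k ∈ Finset.range NT, pairh N (U k) (U k)

/-- Bregman divergence of the entropy, `D_E(Y*, Y)`. -/
noncomputable def DE (N : ℕ) [NeZero N] (NT : ℕ) (Δt : ℝ) (M' U' M U : ℕ → Grid N) : ℝ :=
  entE N NT Δt M' U' - entE N NT Δt M U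
    - (Δt * ∑ k ∈ Finset.Icc 1 NT,
        pairh N (fun i j => Real.log (M k i j)) (fun i j => M' k i j - M k i j)
      + Δt * ∑ k ∈ Finset.range NT, pairh N (U k) (fun i j => U' k i j - U k i j))

/-- The Hessian–Riemannian flow equations on a set `D` of artificial times. -/
def IsHRFOn (N : ℕ) [NeZero N] (NT : ℕ) (g : ZMod N → ZMod N → (Fin 4 → ℝ) → ℝ)
    (f : ℝ → ℝ) (Vh : Grid N) (ν Δt : ℝ)
    (Ms Us : ℝ → ℕ → Grid N) (D : Set ℝ) : Prop :=
  ∀ s ∈ D, ∀ k ∈ Finset.Icc 1 NT,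
    (∀ i j, HasDerivWithinAt (fun t => Ms t k i j)
      (-(Ms s k i j) * (rkFD N g f Vh ν Δt (Ms s) (Us s) k i j
        - rbarFD N g f Vh ν Δt (Ms s) (Us s) k)) D s) ∧
    (∀ i j, HasDerivWithinAt (fun t => Us t (k - 1) i j)
      (-(skFD N g ν Δt (Ms s) (Us s) k i j)) D s)

section AuxMFG

variable {N : ℕ} [NeZero N]

lemma dsum_add (f g : Grid N) :
    ∑ i : ZMod N, ∑ j : ZMod N, (f i j + g i j)
      = (∑ i : ZMod N, ∑ j : ZMod N, f i j) + ∑ i : ZMod N, ∑ j : ZMod N, g i j := by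
  simp [Finset.sum_add_distrib]

lemma dsum_sub (f g : Grid N) :
    ∑ i : ZMod N, ∑ j : ZMod N, (f i j - g i j)
      = (∑ i : ZMod N, ∑ j : ZMod N, f i j) - ∑ i : ZMod N, ∑ j : ZMod N, g i j := by
  simp [Finset.sum_sub_distrib]

lemma dsum_mul (c : ℝ) (f : Grid N) :
    ∑ i : ZMod N, ∑ j : ZMod N, c * f i j = c * ∑ i : ZMod N, ∑ j : ZMod N, f i j := by
  simp [Finset.mul_sum]

lemma dsum_div (c : ℝ) (f : Grid N) :
    (∑ i : ZMod N, ∑ j : ZMod N, f i j) / c = ∑ i : ZMod N, ∑ j : ZMod N, f i j / c := by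
  simp [Finset.sum_div]

lemma dsum_congr {f g : Grid N} (h : ∀ i j, f i j = g i j) :
    ∑ i : ZMod N, ∑ j : ZMod N, f i j = ∑ i : ZMod N, ∑ j : ZMod N, g i j :=
  Finset.sum_congr rfl fun i _ => Finset.sum_congr rfl fun j _ => h i j

/-- summation by parts, `D₁⁻` against `D₁⁺`. -/
lemma sbp_D1m (a b : Grid N) :
    ∑ i : ZMod N, ∑ j : ZMod N, D1m N a i j * b i j
      = -∑ i : ZMod N, ∑ j : ZMod N, a i j * D1p N b i j := by
  have key : ∑ i : ZMod N, ∑ j : ZMod N, a (i - 1) j * b i j / gridh N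
      = ∑ i : ZMod N, ∑ j : ZMod N, a i j * b (i + 1) j / gridh N := by
    refine Fintype.sum_equiv (Equiv.subRight (1 : ZMod N)) _ _ fun x => ?_
    simp [Equiv.subRight]
  have e1 : ∑ i : ZMod N, ∑ j : ZMod N, D1m N a i j * b i j
      = (∑ i : ZMod N, ∑ j : ZMod N, a i j * b i j / gridh N)
        - ∑ i : ZMod N, ∑ j : ZMod N, a (i - 1) j * b i j / gridh N := by
    rw [← dsum_sub]
    exact dsum_congr fun i j => by simp only [D1m]; ring
  have e2 : ∑ i : ZMod N, ∑ j : ZMod N, a i j * D1p N b i j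
      = (∑ i : ZMod N, ∑ j : ZMod N, a i j * b (i + 1) j / gridh N)
        - ∑ i : ZMod N, ∑ j : ZMod N, a i j * b i j / gridh N := by
    rw [← dsum_sub]
    exact dsum_congr fun i j => by simp only [D1p]; ring
  rw [e1, e2, key]; ring

lemma sbp_D1p (a b : Grid N) :
    ∑ i : ZMod N, ∑ j : ZMod N, D1p N a i j * b i j
      = -∑ i : ZMod N, ∑ j : ZMod N, a i j * D1m N b i j := by
  have key : ∑ i : ZMod N, ∑ j : ZMod N, a (i + 1) j * b i j / gridh N
      = ∑ i : ZMod N, ∑ j : ZMod N, a i j * b (i - 1) j / gridh N := by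
    refine Fintype.sum_equiv (Equiv.addRight (1 : ZMod N)) _ _ fun x => ?_
    simp [Equiv.addRight]
  have e1 : ∑ i : ZMod N, ∑ j : ZMod N, D1p N a i j * b i j
      = (∑ i : ZMod N, ∑ j : ZMod N, a (i + 1) j * b i j / gridh N)
        - ∑ i : ZMod N, ∑ j : ZMod N, a i j * b i j / gridh N := by
    rw [← dsum_sub]
    exact dsum_congr fun i j => by simp only [D1p]; ring
  have e2 : ∑ i : ZMod N, ∑ j : ZMod N, a i j * D1m N b i j
      = (∑ i : ZMod N, ∑ j : ZMod N, a i j * b i j / gridh N)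
        - ∑ i : ZMod N, ∑ j : ZMod N, a i j * b (i - 1) j / gridh N := by
    rw [← dsum_sub]
    exact dsum_congr fun i j => by simp only [D1m]; ring
  rw [e1, e2, key]; ring

lemma sbp_D2m (a b : Grid N) :
    ∑ i : ZMod N, ∑ j : ZMod N, D2m N a i j * b i j
      = -∑ i : ZMod N, ∑ j : ZMod N, a i j * D2p N b i j := by
  have key : ∑ i : ZMod N, ∑ j : ZMod N, a i (j - 1) * b i j / gridh N
      = ∑ i : ZMod N, ∑ j : ZMod N, a i j * b i (j + 1) / gridh N := by
    refine Finset.sum_congr rfl fun i _ => ?_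
    refine Fintype.sum_equiv (Equiv.subRight (1 : ZMod N)) _ _ fun x => ?_
    simp [Equiv.subRight]
  have e1 : ∑ i : ZMod N, ∑ j : ZMod N, D2m N a i j * b i j
      = (∑ i : ZMod N, ∑ j : ZMod N, a i j * b i j / gridh N)
        - ∑ i : ZMod N, ∑ j : ZMod N, a i (j - 1) * b i j / gridh N := by
    rw [← dsum_sub]
    exact dsum_congr fun i j => by simp only [D2m]; ring
  have e2 : ∑ i : ZMod N, ∑ j : ZMod N, a i j * D2p N b i j
      = (∑ i : ZMod N, ∑ j : ZMod N, a i j * b i (j + 1) / gridh N)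
        - ∑ i : ZMod N, ∑ j : ZMod N, a i j * b i j / gridh N := by
    rw [← dsum_sub]
    exact dsum_congr fun i j => by simp only [D2p]; ring
  rw [e1, e2, key]; ring

lemma sbp_D2p (a b : Grid N) :
    ∑ i : ZMod N, ∑ j : ZMod N, D2p N a i j * b i j
      = -∑ i : ZMod N, ∑ j : ZMod N, a i j * D2m N b i j := by
  have key : ∑ i : ZMod N, ∑ j : ZMod N, a i (j + 1) * b i j / gridh N
      = ∑ i : ZMod N, ∑ j : ZMod N, a i j * b i (j - 1) / gridh N := by
    refine Finset.sum_congr rfl fun i _ => ?_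
    refine Fintype.sum_equiv (Equiv.addRight (1 : ZMod N)) _ _ fun x => ?_
    simp [Equiv.addRight]
  have e1 : ∑ i : ZMod N, ∑ j : ZMod N, D2p N a i j * b i j
      = (∑ i : ZMod N, ∑ j : ZMod N, a i (j + 1) * b i j / gridh N)
        - ∑ i : ZMod N, ∑ j : ZMod N, a i j * b i j / gridh N := by
    rw [← dsum_sub]
    exact dsum_congr fun i j => by simp only [D2p]; ring
  have e2 : ∑ i : ZMod N, ∑ j : ZMod N, a i j * D2m N b i j
      = (∑ i : ZMod N, ∑ j : ZMod N, a i j * b i j / gridh N)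
        - ∑ i : ZMod N, ∑ j : ZMod N, a i j * b i (j - 1) / gridh N := by
    rw [← dsum_sub]
    exact dsum_congr fun i j => by simp only [D2m]; ring
  rw [e1, e2, key]; ring

end AuxMFG
set_option linter.unusedSectionVars false

section AuxMFG2

variable {N : ℕ} [NeZero N]

lemma dsum_neg (f : Grid N) :
    ∑ i : ZMod N, ∑ j : ZMod N, (-f i j) = -∑ i : ZMod N, ∑ j : ZMod N, f i j := by
  simp

lemma lap_decomp (y : Grid N) (i j : ZMod N) :
    lapFD N y i j = D1p N (D1m N y) i j + D2p N (D2m N y) i j := by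
  simp only [lapFD, D1p, D1m, D2p, D2m]
  ring

lemma lap_symm (a b : Grid N) :
    ∑ i : ZMod N, ∑ j : ZMod N, lapFD N a i j * b i j
      = ∑ i : ZMod N, ∑ j : ZMod N, lapFD N b i j * a i j := by
  have key : ∀ x y : Grid N,
      ∑ i : ZMod N, ∑ j : ZMod N, lapFD N x i j * y i j
        = -(∑ i : ZMod N, ∑ j : ZMod N, D1m N x i j * D1m N y i j)
          - ∑ i : ZMod N, ∑ j : ZMod N, D2m N x i j * D2m N y i j := by
    intro x y
    have e0 : ∑ i : ZMod N, ∑ j : ZMod N, lapFD N x i j * y i j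
        = (∑ i : ZMod N, ∑ j : ZMod N, D1p N (D1m N x) i j * y i j)
          + ∑ i : ZMod N, ∑ j : ZMod N, D2p N (D2m N x) i j * y i j := by
      rw [← dsum_add]
      exact dsum_congr fun i j => by rw [lap_decomp, add_mul]
    rw [e0, sbp_D1p, sbp_D2p]
    ring
  have h1 : ∑ i : ZMod N, ∑ j : ZMod N, D1m N a i j * D1m N b i j
      = ∑ i : ZMod N, ∑ j : ZMod N, D1m N b i j * D1m N a i j :=
    dsum_congr fun i j => mul_comm _ _
  have h2 : ∑ i : ZMod N, ∑ j : ZMod N, D2m N a i j * D2m N b i j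
      = ∑ i : ZMod N, ∑ j : ZMod N, D2m N b i j * D2m N a i j :=
    dsum_congr fun i j => mul_comm _ _
  rw [key, key, h1, h2]

lemma clm_eq_sum (L : (Fin 4 → ℝ) →L[ℝ] ℝ) (v : Fin 4 → ℝ) :
    L v = ∑ l : Fin 4, v l * L (Pi.single l 1) := by
  have hv : v = ∑ l : Fin 4, v l • (Pi.single l 1 : Fin 4 → ℝ) := by
    funext m
    simp [Pi.single_apply]
  conv_lhs => rw [hv]
  rw [map_sum]
  exact Finset.sum_congr rfl fun l _ => by rw [map_smul]; simp [smul_eq_mul]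

lemma DHs_sub (A B : Grid N) (i j : ZMod N) :
    DHs N (fun a b => A a b - B a b) i j = DHs N A i j - DHs N B i j := by
  funext l
  fin_cases l <;>
    simp [DHs, D1p, D1m, D2p, D2m, sub_div] <;> ring

lemma sbp_Bh (g : ZMod N → ZMod N → (Fin 4 → ℝ) → ℝ) (Uu Mm w : Grid N) :
    ∑ i : ZMod N, ∑ j : ZMod N, Bh N g Uu Mm i j * w i j
      = ∑ i : ZMod N, ∑ j : ZMod N,
          Mm i j * fderiv ℝ (g i j) (DHs N Uu i j) (DHs N w i j) := by
  have eA : ∑ i : ZMod N, ∑ j : ZMod N, Bh N g Uu Mm i j * w i j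
      = ∑ i : ZMod N, ∑ j : ZMod N,
          (-(D1m N (fun a b => Mm a b * alphaFD N g Uu 0 a b) i j * w i j)
            - D1p N (fun a b => Mm a b * alphaFD N g Uu 1 a b) i j * w i j
            - D2m N (fun a b => Mm a b * alphaFD N g Uu 2 a b) i j * w i j
            - D2p N (fun a b => Mm a b * alphaFD N g Uu 3 a b) i j * w i j) :=
    dsum_congr fun i j => by simp only [Bh]; ring
  have merge : (∑ i : ZMod N, ∑ j : ZMod N,
        Mm i j * alphaFD N g Uu 0 i j * D1p N w i j)
      + (∑ i : ZMod N, ∑ j : ZMod N, Mm i j * alphaFD N g Uu 1 i j * D1m N w i j)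
      + (∑ i : ZMod N, ∑ j : ZMod N, Mm i j * alphaFD N g Uu 2 i j * D2p N w i j)
      + (∑ i : ZMod N, ∑ j : ZMod N, Mm i j * alphaFD N g Uu 3 i j * D2m N w i j)
      = ∑ i : ZMod N, ∑ j : ZMod N,
          Mm i j * fderiv ℝ (g i j) (DHs N Uu i j) (DHs N w i j) := by
    rw [← dsum_add, ← dsum_add, ← dsum_add]
    refine dsum_congr fun i j => ?_
    rw [clm_eq_sum (fderiv ℝ (g i j) (DHs N Uu i j)) (DHs N w i j), Fin.sum_univ_four]
    simp only [alphaFD]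
    rw [show (DHs N w i j) 0 = D1p N w i j from rfl,
      show (DHs N w i j) 1 = D1m N w i j from rfl,
      show (DHs N w i j) 2 = D2p N w i j from rfl,
      show (DHs N w i j) 3 = D2m N w i j from rfl]
    ring
  rw [eA, dsum_sub, dsum_sub, dsum_sub, dsum_neg, sbp_D1m, sbp_D1p, sbp_D2m, sbp_D2p]
  beta_reduce
  linarith [merge]

end AuxMFG2
section AuxMFG3

lemma bregman_pos {g : (Fin 4 → ℝ) → ℝ} (hg1 : ContDiff ℝ 1 g)
    (hg2 : StrictConvexOn ℝ Set.univ g) {x y : Fin 4 → ℝ} (hxy : x ≠ y) :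
    0 < g y - g x - fderiv ℝ g x (y - x) := by
  set v : Fin 4 → ℝ := y - x with hv
  have hv0 : v ≠ 0 := sub_ne_zero.mpr (Ne.symm hxy)
  set φ : ℝ → ℝ := fun t => g (x + t • v) with hφ
  have hline : HasDerivAt (fun s : ℝ => x + s • v) v 0 := by
    simpa using ((hasDerivAt_id (0 : ℝ)).smul_const v).const_add x
  have hgx : HasFDerivAt g (fderiv ℝ g x) ((fun s : ℝ => x + s • v) 0) := by
    simpa using ((hg1.differentiable one_ne_zero) x).hasFDerivAt
  have hφd : HasDerivAt φ (fderiv ℝ g x v) 0 := by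
    simpa [hφ, Function.comp_def] using hgx.comp_hasDerivAt 0 hline
  have hφc : StrictConvexOn ℝ (Set.univ : Set ℝ) φ := by
    refine ⟨convex_univ, fun s _ t _ hst a b ha hb hab => ?_⟩
    have hpt : x + (a • s + b • t) • v = a • (x + s • v) + b • (x + t • v) := by
      funext m
      simp only [Pi.add_apply, Pi.smul_apply, smul_eq_mul]
      linear_combination (-(x m)) * hab
    have hne : x + s • v ≠ x + t • v := by
      intro hEq
      have h2 : s • v = t • v := by
        have := add_left_cancel hEq
        exact this
      have h3 : (s - t) • v = 0 := by rw [sub_smul, h2, sub_self]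
      rcases smul_eq_zero.mp h3 with h4 | h4
      · exact hst (sub_eq_zero.mp h4)
      · exact hv0 h4
    calc φ (a • s + b • t) = g (a • (x + s • v) + b • (x + t • v)) := by rw [hφ]; simp only; rw [hpt]
      _ < a • g (x + s • v) + b • g (x + t • v) :=
        hg2.2 (Set.mem_univ _) (Set.mem_univ _) hne ha hb hab
      _ = a • φ s + b • φ t := rfl
  have hslope := hφc.lt_slope_of_hasDerivAt (Set.mem_univ (0 : ℝ)) (Set.mem_univ (1 : ℝ))
    zero_lt_one hφd
  have hs : slope φ 0 1 = φ 1 - φ 0 := by simp [slope]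
  have h1 : φ 1 = g y := by
    rw [hφ]; simp only; rw [one_smul, hv]; congr 1; abel
  have h0 : φ 0 = g x := by
    rw [hφ]; simp only; rw [zero_smul, add_zero]
  rw [hs, h1, h0] at hslope
  linarith

lemma bregman_nonneg {g : (Fin 4 → ℝ) → ℝ} (hg1 : ContDiff ℝ 1 g)
    (hg2 : StrictConvexOn ℝ Set.univ g) (x y : Fin 4 → ℝ) :
    0 ≤ g y - g x - fderiv ℝ g x (y - x) := by
  rcases eq_or_ne x y with h | h
  · subst h; simp
  · exact (bregman_pos hg1 hg2 h).le

lemma mono_mul_nonneg {f : ℝ → ℝ} (hf : StrictMonoOn f (Set.Ioi 0)) {a b : ℝ}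
    (ha : 0 < a) (hb : 0 < b) : 0 ≤ (f a - f b) * (a - b) := by
  rcases lt_trichotomy a b with h | h | h
  · have := hf (Set.mem_Ioi.mpr ha) (Set.mem_Ioi.mpr hb) h
    nlinarith
  · simp [h]
  · have := hf (Set.mem_Ioi.mpr hb) (Set.mem_Ioi.mpr ha) h
    nlinarith

lemma mono_mul_pos {f : ℝ → ℝ} (hf : StrictMonoOn f (Set.Ioi 0)) {a b : ℝ}
    (ha : 0 < a) (hb : 0 < b) (hab : a ≠ b) : 0 < (f a - f b) * (a - b) := by
  rcases lt_trichotomy a b with h | h | h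
  · have := hf (Set.mem_Ioi.mpr ha) (Set.mem_Ioi.mpr hb) h
    nlinarith
  · exact absurd h hab
  · have := hf (Set.mem_Ioi.mpr hb) (Set.mem_Ioi.mpr ha) h
    nlinarith

lemma telescope_Icc (G : ℕ → ℝ) (n : ℕ) :
    ∑ k ∈ Finset.Icc 1 n, (G k - G (k - 1)) = G n - G 0 := by
  induction n with
  | zero => simp
  | succ n ih =>
    rw [Finset.sum_Icc_succ_top (by omega : 1 ≤ n + 1), ih]
    simp only [Nat.add_sub_cancel]
    ring

end AuxMFG3
/-- The nonnegative nodal term. -/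
noncomputable def Tterm (N : ℕ) (g : ZMod N → ZMod N → (Fin 4 → ℝ) → ℝ) (f : ℝ → ℝ)
    (M U M' U' : ℕ → Grid N) (k : ℕ) (i j : ZMod N) : ℝ :=
  (f (M k i j) - f (M' k i j)) * (M k i j - M' k i j)
    + M k i j * (g i j (DHs N (U' (k - 1)) i j) - g i j (DHs N (U (k - 1)) i j)
        - fderiv ℝ (g i j) (DHs N (U (k - 1)) i j)
            (DHs N (U' (k - 1)) i j - DHs N (U (k - 1)) i j))
    + M' k i j * (g i j (DHs N (U (k - 1)) i j) - g i j (DHs N (U' (k - 1)) i j)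
        - fderiv ℝ (g i j) (DHs N (U' (k - 1)) i j)
            (DHs N (U (k - 1)) i j - DHs N (U' (k - 1)) i j))

section KeyStep

variable {N : ℕ} [NeZero N]

lemma key_step (g : ZMod N → ZMod N → (Fin 4 → ℝ) → ℝ) (f : ℝ → ℝ) (Vh : Grid N)
    (ν Δt : ℝ) (M U M' U' : ℕ → Grid N) (k : ℕ) :
    (∑ i : ZMod N, ∑ j : ZMod N,
        (rkFD N g f Vh ν Δt M U k i j - rkFD N g f Vh ν Δt M' U' k i j)
          * (M k i j - M' k i j))
      + ∑ i : ZMod N, ∑ j : ZMod N,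
        (skFD N g ν Δt M U k i j - skFD N g ν Δt M' U' k i j)
          * (U (k - 1) i j - U' (k - 1) i j)
    = ((∑ i : ZMod N, ∑ j : ZMod N, (U k i j - U' k i j) * (M k i j - M' k i j))
        - ∑ i : ZMod N, ∑ j : ZMod N,
            (U (k - 1) i j - U' (k - 1) i j) * (M (k - 1) i j - M' (k - 1) i j)) / Δt
      + ∑ i : ZMod N, ∑ j : ZMod N, Tterm N g f M U M' U' k i j := by
  have hB1 := sbp_Bh g (U (k - 1)) (M k) (fun a b => U (k - 1) a b - U' (k - 1) a b)
  have hB2 := sbp_Bh g (U' (k - 1)) (M' k) (fun a b => U (k - 1) a b - U' (k - 1) a b)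
  have hLap := lap_symm (N := N) (fun a b => U (k - 1) a b - U' (k - 1) a b)
    (fun a b => M k a b - M' k a b)
  beta_reduce at hLap
  have step1 : (∑ i : ZMod N, ∑ j : ZMod N,
        (rkFD N g f Vh ν Δt M U k i j - rkFD N g f Vh ν Δt M' U' k i j)
          * (M k i j - M' k i j))
      + ∑ i : ZMod N, ∑ j : ZMod N,
        (skFD N g ν Δt M U k i j - skFD N g ν Δt M' U' k i j)
          * (U (k - 1) i j - U' (k - 1) i j)
    = ∑ i : ZMod N, ∑ j : ZMod N,
        ((((U k i j - U' k i j) * (M k i j - M' k i j)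
            - (U (k - 1) i j - U' (k - 1) i j) * (M (k - 1) i j - M' (k - 1) i j)) / Δt
          + (-(g i j (DHs N (U (k - 1)) i j) - g i j (DHs N (U' (k - 1)) i j))
              + (f (M k i j) - f (M' k i j))) * (M k i j - M' k i j))
        + ν * (lapFD N (fun a b => U (k - 1) a b - U' (k - 1) a b) i j
                  * (M k i j - M' k i j)
                - lapFD N (fun a b => M k a b - M' k a b) i j
                  * (U (k - 1) i j - U' (k - 1) i j))
        + (Bh N g (U (k - 1)) (M k) i j * (U (k - 1) i j - U' (k - 1) i j)
            - Bh N g (U' (k - 1)) (M' k) i j * (U (k - 1) i j - U' (k - 1) i j))) := by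
    rw [← dsum_add]
    refine dsum_congr fun i j => ?_
    simp only [rkFD, skFD, lapFD]
    ring
  rw [step1, dsum_add, dsum_add, dsum_mul, dsum_sub, dsum_sub
    (f := fun i j => Bh N g (U (k - 1)) (M k) i j * (U (k - 1) i j - U' (k - 1) i j)),
    hLap, sub_self, mul_zero, add_zero, hB1, hB2, ← dsum_sub, ← dsum_add]
  have rhs_eq : ((∑ i : ZMod N, ∑ j : ZMod N, (U k i j - U' k i j) * (M k i j - M' k i j))
        - ∑ i : ZMod N, ∑ j : ZMod N,
            (U (k - 1) i j - U' (k - 1) i j) * (M (k - 1) i j - M' (k - 1) i j)) / Δt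
      + ∑ i : ZMod N, ∑ j : ZMod N, Tterm N g f M U M' U' k i j
    = ∑ i : ZMod N, ∑ j : ZMod N,
        (((U k i j - U' k i j) * (M k i j - M' k i j)
          - (U (k - 1) i j - U' (k - 1) i j) * (M (k - 1) i j - M' (k - 1) i j)) / Δt
        + Tterm N g f M U M' U' k i j) := by
    rw [← dsum_sub, dsum_div, ← dsum_add]
  rw [rhs_eq]
  refine dsum_congr fun i j => ?_
  rw [DHs_sub (U (k - 1)) (U' (k - 1)) i j]
  simp only [Tterm, map_sub]
  ring

end KeyStep
/-- strict monotonicity of the discrete time-dependent MFG residual operator. -/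
theorem discrete_mfg_residual_monotone (N : ℕ) [NeZero N] (NT : ℕ) (hNT : 1 ≤ NT)
    (Δt ν : ℝ) (hΔt : 0 < Δt) (hν : 0 ≤ ν)
    (g : ZMod N → ZMod N → (Fin 4 → ℝ) → ℝ)
    (hg1 : ∀ i j, ContDiff ℝ 1 (g i j))
    (hg2 : ∀ i j, StrictConvexOn ℝ Set.univ (g i j))
    (f : ℝ → ℝ) (hf : StrictMonoOn f (Set.Ioi 0))
    (Vh : Grid N)
    (M U M' U' : ℕ → Grid N)
    (hpos : ∀ k ∈ Finset.Icc 1 NT, ∀ i j, 0 < M k i j)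
    (hpos' : ∀ k ∈ Finset.Icc 1 NT, ∀ i j, 0 < M' k i j)
    (hM0 : M 0 = M' 0) (hUT : U NT = U' NT) :
    0 ≤ Δt * ∑ k ∈ Finset.Icc 1 NT,
          pairh N (fun i j => rkFD N g f Vh ν Δt M U k i j - rkFD N g f Vh ν Δt M' U' k i j)
            (fun i j => M k i j - M' k i j)
        + Δt * ∑ k ∈ Finset.Icc 1 NT,
          pairh N (fun i j => skFD N g ν Δt M U k i j - skFD N g ν Δt M' U' k i j)
            (fun i j => U (k - 1) i j - U' (k - 1) i j) ∧
    (((∃ k ∈ Finset.Icc 1 NT, M k ≠ M' k) ∨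
        (∃ k ∈ Finset.Icc 1 NT, ∃ i j, DHs N (U (k - 1)) i j ≠ DHs N (U' (k - 1)) i j)) →
      0 < Δt * ∑ k ∈ Finset.Icc 1 NT,
            pairh N (fun i j => rkFD N g f Vh ν Δt M U k i j - rkFD N g f Vh ν Δt M' U' k i j)
              (fun i j => M k i j - M' k i j)
          + Δt * ∑ k ∈ Finset.Icc 1 NT,
            pairh N (fun i j => skFD N g ν Δt M U k i j - skFD N g ν Δt M' U' k i j)
              (fun i j => U (k - 1) i j - U' (k - 1) i j)) := by
  have hh : (0 : ℝ) < gridh N ^ 2 := by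
    have hN : (0 : ℝ) < (N : ℝ) := by exact_mod_cast Nat.pos_of_ne_zero (NeZero.ne N)
    have hg : (0 : ℝ) < gridh N := by rw [gridh]; positivity
    positivity
  have hT0 : ∀ k ∈ Finset.Icc 1 NT, ∀ i j, 0 ≤ Tterm N g f M U M' U' k i j := by
    intro k hk i j
    refine add_nonneg (add_nonneg ?_ ?_) ?_
    · exact mono_mul_nonneg hf (hpos k hk i j) (hpos' k hk i j)
    · exact mul_nonneg (hpos k hk i j).le (bregman_nonneg (hg1 i j) (hg2 i j) _ _)
    · exact mul_nonneg (hpos' k hk i j).le (bregman_nonneg (hg1 i j) (hg2 i j) _ _)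
  have hkey : ∀ k : ℕ,
      pairh N (fun i j => rkFD N g f Vh ν Δt M U k i j - rkFD N g f Vh ν Δt M' U' k i j)
          (fun i j => M k i j - M' k i j)
        + pairh N (fun i j => skFD N g ν Δt M U k i j - skFD N g ν Δt M' U' k i j)
          (fun i j => U (k - 1) i j - U' (k - 1) i j)
      = gridh N ^ 2 *
          ((((∑ i : ZMod N, ∑ j : ZMod N, (U k i j - U' k i j) * (M k i j - M' k i j))
            - ∑ i : ZMod N, ∑ j : ZMod N,
                (U (k - 1) i j - U' (k - 1) i j) * (M (k - 1) i j - M' (k - 1) i j)) / Δt)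
            + ∑ i : ZMod N, ∑ j : ZMod N, Tterm N g f M U M' U' k i j) := by
    intro k
    simp only [pairh]
    rw [← mul_add, key_step g f Vh ν Δt M U M' U' k]
  have htel := telescope_Icc
    (fun k => ∑ i : ZMod N, ∑ j : ZMod N, (U k i j - U' k i j) * (M k i j - M' k i j)) NT
  beta_reduce at htel
  have hGNT : ∑ i : ZMod N, ∑ j : ZMod N, (U NT i j - U' NT i j) * (M NT i j - M' NT i j)
      = 0 := by simp [hUT]
  have hG0 : ∑ i : ZMod N, ∑ j : ZMod N, (U 0 i j - U' 0 i j) * (M 0 i j - M' 0 i j)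
      = 0 := by simp [hM0]
  have main : Δt * ∑ k ∈ Finset.Icc 1 NT,
          pairh N (fun i j => rkFD N g f Vh ν Δt M U k i j - rkFD N g f Vh ν Δt M' U' k i j)
            (fun i j => M k i j - M' k i j)
        + Δt * ∑ k ∈ Finset.Icc 1 NT,
          pairh N (fun i j => skFD N g ν Δt M U k i j - skFD N g ν Δt M' U' k i j)
            (fun i j => U (k - 1) i j - U' (k - 1) i j)
      = Δt * gridh N ^ 2 *
          ∑ k ∈ Finset.Icc 1 NT, ∑ i : ZMod N, ∑ j : ZMod N,
            Tterm N g f M U M' U' k i j := by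
    calc Δt * ∑ k ∈ Finset.Icc 1 NT,
          pairh N (fun i j => rkFD N g f Vh ν Δt M U k i j - rkFD N g f Vh ν Δt M' U' k i j)
            (fun i j => M k i j - M' k i j)
        + Δt * ∑ k ∈ Finset.Icc 1 NT,
          pairh N (fun i j => skFD N g ν Δt M U k i j - skFD N g ν Δt M' U' k i j)
            (fun i j => U (k - 1) i j - U' (k - 1) i j)
        = Δt * ∑ k ∈ Finset.Icc 1 NT,
            (pairh N (fun i j => rkFD N g f Vh ν Δt M U k i j - rkFD N g f Vh ν Δt M' U' k i j)
              (fun i j => M k i j - M' k i j)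
            + pairh N (fun i j => skFD N g ν Δt M U k i j - skFD N g ν Δt M' U' k i j)
              (fun i j => U (k - 1) i j - U' (k - 1) i j)) := by
          rw [Finset.sum_add_distrib]; ring
      _ = Δt * ∑ k ∈ Finset.Icc 1 NT, (gridh N ^ 2 *
            ((((∑ i : ZMod N, ∑ j : ZMod N, (U k i j - U' k i j) * (M k i j - M' k i j))
              - ∑ i : ZMod N, ∑ j : ZMod N,
                  (U (k - 1) i j - U' (k - 1) i j) * (M (k - 1) i j - M' (k - 1) i j)) / Δt)
              + ∑ i : ZMod N, ∑ j : ZMod N, Tterm N g f M U M' U' k i j)) := by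
          congr 1
          exact Finset.sum_congr rfl fun k _ => hkey k
      _ = Δt * (gridh N ^ 2 *
            (((∑ k ∈ Finset.Icc 1 NT,
              ((∑ i : ZMod N, ∑ j : ZMod N, (U k i j - U' k i j) * (M k i j - M' k i j))
              - ∑ i : ZMod N, ∑ j : ZMod N,
                  (U (k - 1) i j - U' (k - 1) i j) * (M (k - 1) i j - M' (k - 1) i j))) / Δt)
              + ∑ k ∈ Finset.Icc 1 NT, ∑ i : ZMod N, ∑ j : ZMod N,
                  Tterm N g f M U M' U' k i j)) := by
          rw [← Finset.mul_sum, Finset.sum_add_distrib, ← Finset.sum_div]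
      _ = Δt * gridh N ^ 2 *
            ∑ k ∈ Finset.Icc 1 NT, ∑ i : ZMod N, ∑ j : ZMod N,
              Tterm N g f M U M' U' k i j := by
          rw [htel, hGNT, hG0]
          ring
  constructor
  · rw [main]
    exact mul_nonneg (mul_nonneg hΔt.le hh.le)
      (Finset.sum_nonneg fun k hk => Finset.sum_nonneg fun i _ =>
        Finset.sum_nonneg fun j _ => hT0 k hk i j)
  · intro hcase
    rw [main]
    have hsum : 0 < ∑ k ∈ Finset.Icc 1 NT, ∑ i : ZMod N, ∑ j : ZMod N,
        Tterm N g f M U M' U' k i j := by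
      obtain ⟨k0, hk0, i0, j0, hTpos⟩ :
          ∃ k0 ∈ Finset.Icc 1 NT, ∃ i0 j0, 0 < Tterm N g f M U M' U' k0 i0 j0 := by
        rcases hcase with ⟨k0, hk0, hne⟩ | ⟨k0, hk0, i0, j0, hne⟩
        · have : ∃ i j, M k0 i j ≠ M' k0 i j := by
            by_contra hc
            push_neg at hc
            exact hne (funext fun i => funext fun j => hc i j)
          obtain ⟨i0, j0, hne'⟩ := this
          refine ⟨k0, hk0, i0, j0, ?_⟩
          refine add_pos_of_pos_of_nonneg (add_pos_of_pos_of_nonneg ?_ ?_) ?_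
          · exact mono_mul_pos hf (hpos k0 hk0 i0 j0) (hpos' k0 hk0 i0 j0) hne'
          · exact mul_nonneg (hpos k0 hk0 i0 j0).le (bregman_nonneg (hg1 i0 j0) (hg2 i0 j0) _ _)
          · exact mul_nonneg (hpos' k0 hk0 i0 j0).le (bregman_nonneg (hg1 i0 j0) (hg2 i0 j0) _ _)
        · refine ⟨k0, hk0, i0, j0, ?_⟩
          refine add_pos_of_pos_of_nonneg (add_pos_of_nonneg_of_pos ?_ ?_) ?_
          · exact mono_mul_nonneg hf (hpos k0 hk0 i0 j0) (hpos' k0 hk0 i0 j0)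
          · exact mul_pos (hpos k0 hk0 i0 j0) (bregman_pos (hg1 i0 j0) (hg2 i0 j0) hne)
          · exact mul_nonneg (hpos' k0 hk0 i0 j0).le (bregman_nonneg (hg1 i0 j0) (hg2 i0 j0) _ _)
      refine Finset.sum_pos' (fun k hk => Finset.sum_nonneg fun i _ =>
        Finset.sum_nonneg fun j _ => hT0 k hk i j) ⟨k0, hk0, ?_⟩
      refine Finset.sum_pos' (fun i _ => Finset.sum_nonneg fun j _ => hT0 k0 hk0 i j)
        ⟨i0, Finset.mem_univ _, ?_⟩
      exact Finset.sum_pos' (fun j _ => hT0 k0 hk0 i0 j) ⟨j0, Finset.mem_univ _, hTpos⟩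
    exact mul_pos (mul_pos hΔt hh) hsum
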